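/- Shasha–Zhang recurrence for forest similarity: sim(F, F') = 0 if F or F' is empty, and otherwise sim(F,F') = max{ sim(F∖v_1, F'), sim(F, F'∖v_1'), sim(F∖sub(v_1), F'∖sub(v_1')) + sim(sub(v_1), sub(v_1')) }, where v_1, v_1' are the first nodes in the pre-orders of F, F'. -/

import Mathlib

namespace Stmt12

/-- A rooted ordered tree with labels in `α`. -/
inductive LTree (α : Type*) : Type _ where
  | node : α → List (LTree α) → LTree α

/-- An ordered forest. -/
abbrev LForest (α : Type*) := List (LTree α)

mutual
/-- Number of nodes of a tree. -/
def sizeT {α : Type*} : LTree α → ℕ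
  | .node _ ts => 1 + sizeF ts
/-- Number of nodes of a forest. -/
def sizeF {α : Type*} : LForest α → ℕ
  | [] => 0
  | t :: ts => sizeT t + sizeF ts
end

/-- The label of the node of `F` at address `p` (a path of child indices),
if it exists. -/
def labelAt {α : Type*} : LForest α → List ℕ → Option α
  | _, [] => none
  | ts, i :: p =>
    match ts[i]? with
    | none => none
    | some (.node a us) => if p = [] then some a else labelAt us p
termination_by _ p => p.length

/-- `p` is (the address of) a node of the forest `F`. -/
def IsNode {α : Type*} (F : LForest α) (p : List ℕ) : Prop := (labelAt F p).isSome

/-- Two matched pairs of node addresses are compatible: distinct nodes,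
ancestor (address-prefix) relations preserved in both directions, and for
incomparable nodes the pre-order (lexicographic) order is preserved. -/
def Compat (pp qq : List ℕ × List ℕ) : Prop :=
  pp.1 ≠ qq.1 ∧ pp.2 ≠ qq.2 ∧
  (pp.1 <+: qq.1 ↔ pp.2 <+: qq.2) ∧
  (qq.1 <+: pp.1 ↔ qq.2 <+: pp.2) ∧
  (List.Lex (· < ·) pp.1 qq.1 ↔ List.Lex (· < ·) pp.2 qq.2)

/-- A valid similarity mapping between the forests `F` and `F'`. -/
def IsMappingF {α : Type*} (F F' : LForest α) (M : List (List ℕ × List ℕ)) : Prop :=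
  (∀ pr ∈ M, IsNode F pr.1 ∧ IsNode F' pr.2) ∧ M.Pairwise Compat

/-- Total weight of a mapping under the weight function `η` on labels. -/
def wtF {α : Type*} [Inhabited α] (η : α → α → ℤ) (F F' : LForest α)
    (M : List (List ℕ × List ℕ)) : ℤ :=
  (M.map (fun pr =>
    η ((labelAt F pr.1).getD default) ((labelAt F' pr.2).getD default))).sum

/-- The set of achievable mapping weights; its greatest element is the forest
similarity `sim(F, F')`. -/
def simSetF {α : Type*} [Inhabited α] (η : α → α → ℤ) (F F' : LForest α) : Set ℤ :=
  {s | ∃ M, IsMappingF F F' M ∧ s = wtF η F F' M}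

section Lemmas
variable {α : Type*}
open List
set_option linter.unusedSectionVars false

/-! ### Lex order helpers -/

lemma lex_cons_iff {i j : ℕ} {p q : List ℕ} :
    List.Lex (· < ·) (i :: p) (j :: q) ↔ i < j ∨ (i = j ∧ List.Lex (· < ·) p q) := by
  constructor
  · intro h
    cases h with
    | rel h => exact Or.inl h
    | cons h => exact Or.inr ⟨rfl, h⟩
  · rintro (h | ⟨rfl, h⟩)
    · exact List.Lex.rel h
    · exact List.Lex.cons h

lemma not_lex_nil {r : ℕ → ℕ → Prop} {p : List ℕ} : ¬ List.Lex r p [] := by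
  intro h; cases h

lemma lex_trich (a b : List ℕ) :
    List.Lex (· < ·) a b ∨ a = b ∨ List.Lex (· < ·) b a := by
  induction a generalizing b with
  | nil =>
    cases b with
    | nil => exact Or.inr (Or.inl rfl)
    | cons y ys => exact Or.inl List.Lex.nil
  | cons x xs ih =>
    cases b with
    | nil => exact Or.inr (Or.inr List.Lex.nil)
    | cons y ys =>
      rcases lt_trichotomy x y with h | rfl | h
      · exact Or.inl (List.Lex.rel h)
      · rcases ih ys with h | rfl | h
        · exact Or.inl (List.Lex.cons h)
        · exact Or.inr (Or.inl rfl)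
        · exact Or.inr (Or.inr (List.Lex.cons h))
      · exact Or.inr (Or.inr (List.Lex.rel h))

lemma lex_asymm : ∀ {a b : List ℕ}, List.Lex (· < ·) a b → ¬ List.Lex (· < ·) b a := by
  intro a b h
  induction h with
  | nil => exact not_lex_nil
  | @cons x l1 l2 h ih =>
    intro h'
    cases h' with
    | cons h' => exact ih h'
    | rel h' => exact absurd h' (lt_irrefl x)
  | @rel x l1 y l2 h =>
    intro h'
    cases h' with
    | cons h' => exact absurd h (lt_irrefl x)
    | rel h' => exact absurd h (not_lt.2 h'.le)

lemma prefix_antisymm {p q : List ℕ} (h1 : p <+: q) (h2 : q <+: p) : p = q :=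
  h1.eq_of_length (le_antisymm h1.length_le h2.length_le)

lemma compat_symm : Symmetric Compat := by
  rintro pp qq ⟨h1, h2, h3, h4, h5⟩
  refine ⟨h1.symm, h2.symm, h4, h3, ?_⟩
  constructor
  · intro h
    rcases lex_trich pp.2 qq.2 with h' | h' | h'
    · exact absurd (h5.2 h') (lex_asymm h)
    · exact absurd h' h2
    · exact h'
  · intro h
    rcases lex_trich pp.1 qq.1 with h' | h' | h'
    · exact absurd (h5.1 h') (lex_asymm h)
    · exact absurd h' h1
    · exact h'

/-! ### labelAt helpers -/

lemma labelAt_nil (F : LForest α) : labelAt F [] = none := by rw [labelAt]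

lemma labelAt_cons (F : LForest α) (i : ℕ) (p : List ℕ) :
    labelAt F (i :: p) = match F[i]? with
    | none => none
    | some (.node a us) => if p = [] then some a else labelAt us p := by
  rw [labelAt]

lemma isNode_ne_nil {F : LForest α} {p : List ℕ} (h : IsNode F p) : p ≠ [] := by
  rintro rfl
  simp [IsNode, labelAt_nil] at h

lemma labelAt_append_lt (ts rest : LForest α) {i : ℕ} (hi : i < ts.length) (p : List ℕ) :
    labelAt (ts ++ rest) (i :: p) = labelAt ts (i :: p) := by
  rw [labelAt_cons, labelAt_cons, List.getElem?_append, if_pos hi]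

lemma labelAt_append_ge (ts rest : LForest α) {i : ℕ} (hi : ts.length ≤ i) (p : List ℕ) :
    labelAt (ts ++ rest) (i :: p) = labelAt rest ((i - ts.length) :: p) := by
  rw [labelAt_cons, labelAt_cons, List.getElem?_append_right hi]

lemma labelAt_cons_zero (t : LTree α) (l : LForest α) (q : List ℕ) :
    labelAt (t :: l) (0 :: q) = labelAt [t] (0 :: q) := by
  rw [labelAt_cons, labelAt_cons]
  simp

lemma labelAt_deep (a : α) (ts l : LForest α) (i : ℕ) (p : List ℕ) :
    labelAt (LTree.node a ts :: l) (0 :: i :: p) = labelAt ts (i :: p) := by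
  rw [labelAt_cons]
  simp only [List.getElem?_cons_zero]
  rw [if_neg (by simp)]

lemma labelAt_cons_succ (t : LTree α) (l : LForest α) (j : ℕ) (p : List ℕ) :
    labelAt (t :: l) ((j + 1) :: p) = labelAt l (j :: p) := by
  rw [labelAt_cons, labelAt_cons, List.getElem?_cons_succ]

lemma node_single_head {t : LTree α} {p : List ℕ} (h : IsNode [t] p) :
    ∃ q, p = 0 :: q := by
  rcases p with _ | ⟨i, q⟩
  · exact absurd h (by simp [IsNode, labelAt_nil])
  · rcases i with _ | i
    · exact ⟨q, rfl⟩
    · rw [IsNode, labelAt_cons] at h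
      simp at h

/-! ### Address translations -/

/-- Translation from addresses of `ts ++ rest` into addresses of
`node a ts :: rest`, where `n = ts.length`. -/
def phi (n : ℕ) : List ℕ → List ℕ
  | [] => []
  | i :: p => if i < n then 0 :: i :: p else (i - n + 1) :: p

/-- Partial inverse of `phi n`. -/
def psi (n : ℕ) : List ℕ → List ℕ
  | 0 :: i :: p => i :: p
  | (j + 1) :: p => (n + j) :: p
  | _ => []

/-- Increment the first index. -/
def sg : List ℕ → List ℕ
  | i :: p => (i + 1) :: p
  | [] => []

/-- Decrement the first index. -/
def dec : List ℕ → List ℕ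
  | i :: p => (i - 1) :: p
  | [] => []

lemma labelAt_phi (a : α) (ts rest : LForest α) :
    ∀ p, p ≠ [] → labelAt (LTree.node a ts :: rest) (phi ts.length p) = labelAt (ts ++ rest) p := by
  rintro (_ | ⟨i, p⟩) hp
  · exact absurd rfl hp
  by_cases hi : i < ts.length
  · rw [phi, if_pos hi, labelAt_deep, labelAt_append_lt _ _ hi]
  · rw [phi, if_neg hi, labelAt_cons_succ, labelAt_append_ge _ _ (not_lt.1 hi)]

lemma phi_prefix (n : ℕ) : ∀ p q : List ℕ, p ≠ [] → q ≠ [] →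
    (phi n p <+: phi n q ↔ p <+: q) := by
  rintro (_ | ⟨i, p⟩) (_ | ⟨j, q⟩) hp hq
  · exact absurd rfl hp
  · exact absurd rfl hp
  · exact absurd rfl hq
  rw [phi, phi]
  by_cases hi : i < n <;> by_cases hj : j < n <;>
      simp only [hi, hj, if_true, if_false]
  · simp [List.cons_prefix_cons]
  · simp only [List.cons_prefix_cons]
    constructor <;> rintro ⟨h, h2⟩ <;> omega
  · simp only [List.cons_prefix_cons]
    constructor <;> rintro ⟨h, h2⟩ <;> omega
  · simp only [List.cons_prefix_cons]
    constructor <;> rintro ⟨h, h2⟩ <;> exact ⟨by omega, h2⟩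

lemma phi_lex (n : ℕ) : ∀ p q : List ℕ, p ≠ [] → q ≠ [] →
    (List.Lex (· < ·) (phi n p) (phi n q) ↔ List.Lex (· < ·) p q) := by
  rintro (_ | ⟨i, p⟩) (_ | ⟨j, q⟩) hp hq
  · exact absurd rfl hp
  · exact absurd rfl hp
  · exact absurd rfl hq
  rw [phi, phi]
  by_cases hi : i < n <;> by_cases hj : j < n <;>
      simp only [hi, hj, if_true, if_false] <;>
      simp only [lex_cons_iff]
  · simp
  · constructor <;> intro h <;> left <;> omega
  · constructor <;> rintro (h | ⟨h, h2⟩) <;> omega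
  · constructor <;> rintro (h | ⟨h, h2⟩)
    · left; omega
    · right; exact ⟨by omega, h2⟩
    · left; omega
    · right; exact ⟨by omega, h2⟩

lemma psi_spec {a : α} {ts : LForest α} {rest : LForest α} {p : List ℕ}
    (hp : IsNode (LTree.node a ts :: rest) p) (hne : p ≠ [0]) :
    phi ts.length (psi ts.length p) = p ∧ psi ts.length p ≠ [] := by
  rcases p with _ | ⟨i, q⟩
  · exact absurd hp (by simp [IsNode, labelAt_nil])
  rcases i with _ | j
  · rcases q with _ | ⟨i, q⟩
    · exact absurd rfl hne
    · have hi : i < ts.length := by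
        rw [IsNode, labelAt_deep, labelAt_cons] at hp
        by_contra hi
        rw [List.getElem?_eq_none (by omega)] at hp
        simp at hp
      rw [psi, phi, if_pos hi]
      exact ⟨rfl, by simp⟩
  · rw [psi, phi, if_neg (by omega)]
    constructor
    · congr 1; omega
    · simp

end Lemmas

section Lemmas2
variable {α : Type*} [Inhabited α]
open List
set_option linter.unusedSectionVars false

lemma psi_labelAt {a : α} {ts rest : LForest α} {p : List ℕ}
    (hp : IsNode (LTree.node a ts :: rest) p) (hne : p ≠ [0]) :
    labelAt (ts ++ rest) (psi ts.length p) = labelAt (LTree.node a ts :: rest) p := by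
  rw [← labelAt_phi a ts rest _ (psi_spec hp hne).2, (psi_spec hp hne).1]

lemma labelAt_sg (t : LTree α) (l : LForest α) :
    ∀ p, p ≠ [] → labelAt (t :: l) (sg p) = labelAt l p := by
  rintro (_ | ⟨i, p⟩) hp
  · exact absurd rfl hp
  · rw [sg, labelAt_cons_succ]

lemma sg_prefix : ∀ p q : List ℕ, p ≠ [] → q ≠ [] → (sg p <+: sg q ↔ p <+: q) := by
  rintro (_ | ⟨i, p⟩) (_ | ⟨j, q⟩) hp hq
  · exact absurd rfl hp
  · exact absurd rfl hp
  · exact absurd rfl hq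
  · rw [sg, sg]
    simp only [List.cons_prefix_cons]
    constructor <;> rintro ⟨h, h2⟩ <;> exact ⟨by omega, h2⟩

lemma sg_lex : ∀ p q : List ℕ, p ≠ [] → q ≠ [] →
    (List.Lex (· < ·) (sg p) (sg q) ↔ List.Lex (· < ·) p q) := by
  rintro (_ | ⟨i, p⟩) (_ | ⟨j, q⟩) hp hq
  · exact absurd rfl hp
  · exact absurd rfl hp
  · exact absurd rfl hq
  · rw [sg, sg]
    simp only [lex_cons_iff]
    constructor <;> rintro (h | ⟨h, h2⟩)
    · left; omega
    · right; exact ⟨by omega, h2⟩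
    · left; omega
    · right; exact ⟨by omega, h2⟩

/-- Predicate: the address has positive first index. -/
def PosHead (p : List ℕ) : Prop := ∃ j q, p = (j + 1) :: q

lemma dec_prefix : ∀ p q : List ℕ, PosHead p → PosHead q → (dec p <+: dec q ↔ p <+: q) := by
  rintro _ _ ⟨i, p, rfl⟩ ⟨j, q, rfl⟩
  rw [dec, dec]
  simp only [List.cons_prefix_cons]
  constructor <;> rintro ⟨h, h2⟩ <;> exact ⟨by omega, h2⟩

lemma dec_lex : ∀ p q : List ℕ, PosHead p → PosHead q →
    (List.Lex (· < ·) (dec p) (dec q) ↔ List.Lex (· < ·) p q) := by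
  rintro _ _ ⟨i, p, rfl⟩ ⟨j, q, rfl⟩
  rw [dec, dec]
  simp only [lex_cons_iff]
  constructor <;> rintro (h | ⟨h, h2⟩)
  · left; omega
  · right; exact ⟨by omega, h2⟩
  · left; omega
  · right; exact ⟨by omega, h2⟩

lemma labelAt_dec (t : LTree α) (l : LForest α) :
    ∀ p, PosHead p → labelAt l (dec p) = labelAt (t :: l) p := by
  rintro _ ⟨j, q, rfl⟩
  simp only [dec, labelAt_cons_succ, Nat.add_sub_cancel]

/-- The workhorse: translating a mapping along address translations that
preserve labels, prefix order and lexicographic order. -/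
lemma translate {η : α → α → ℤ} {F G F' G' : LForest α} {f g : List ℕ → List ℕ}
    {P₁ P₂ : List ℕ → Prop} {M : List (List ℕ × List ℕ)}
    (hM : IsMappingF G G' M)
    (hP : ∀ pr ∈ M, P₁ pr.1 ∧ P₂ pr.2)
    (h1 : ∀ p, P₁ p → labelAt F (f p) = labelAt G p)
    (h2 : ∀ p q, P₁ p → P₁ q → (f p <+: f q ↔ p <+: q))
    (h3 : ∀ p q, P₁ p → P₁ q → (List.Lex (· < ·) (f p) (f q) ↔ List.Lex (· < ·) p q))
    (h1' : ∀ p, P₂ p → labelAt F' (g p) = labelAt G' p)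
    (h2' : ∀ p q, P₂ p → P₂ q → (g p <+: g q ↔ p <+: q))
    (h3' : ∀ p q, P₂ p → P₂ q → (List.Lex (· < ·) (g p) (g q) ↔ List.Lex (· < ·) p q)) :
    IsMappingF F F' (M.map (fun pr => (f pr.1, g pr.2))) ∧
      wtF η F F' (M.map (fun pr => (f pr.1, g pr.2))) = wtF η G G' M := by
  refine ⟨⟨?_, ?_⟩, ?_⟩
  · rintro pr' hpr'
    rw [List.mem_map] at hpr'
    obtain ⟨pr, hpr, rfl⟩ := hpr'
    refine ⟨?_, ?_⟩
    · rw [IsNode, h1 _ (hP pr hpr).1]; exact (hM.1 pr hpr).1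
    · rw [IsNode, h1' _ (hP pr hpr).2]; exact (hM.1 pr hpr).2
  · rw [List.pairwise_map]
    have hpw : M.Pairwise (fun pp qq => Compat pp qq ∧
        (P₁ pp.1 ∧ P₂ pp.2) ∧ (P₁ qq.1 ∧ P₂ qq.2)) :=
      List.Pairwise.imp_of_mem (fun ha hb hr => ⟨hr, hP _ ha, hP _ hb⟩) hM.2
    refine hpw.imp ?_
    rintro pp qq ⟨⟨c1, c2, c3, c4, c5⟩, ⟨q1, q2⟩, ⟨r1, r2⟩⟩
    simp only [Compat]
    refine ⟨?_, ?_, ?_, ?_, ?_⟩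
    · intro h
      have h' : f pp.1 = f qq.1 := h
      apply c1
      exact prefix_antisymm ((h2 _ _ q1 r1).1 (h' ▸ List.prefix_refl _))
        ((h2 _ _ r1 q1).1 (h' ▸ List.prefix_refl _))
    · intro h
      have h' : g pp.2 = g qq.2 := h
      apply c2
      exact prefix_antisymm ((h2' _ _ q2 r2).1 (h' ▸ List.prefix_refl _))
        ((h2' _ _ r2 q2).1 (h' ▸ List.prefix_refl _))
    · rw [h2 _ _ q1 r1, h2' _ _ q2 r2]; exact c3
    · rw [h2 _ _ r1 q1, h2' _ _ r2 q2]; exact c4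
    · rw [h3 _ _ q1 r1, h3' _ _ q2 r2]; exact c5
  · rw [wtF, wtF, List.map_map]
    congr 1
    refine List.map_congr_left ?_
    intro pr hpr
    simp only [Function.comp_apply]
    rw [h1 _ (hP pr hpr).1, h1' _ (hP pr hpr).2]

lemma prefix_zero_iff : ∀ p : List ℕ, ([0] <+: p ↔ p.head? = some 0) := by
  rintro (_ | ⟨i, q⟩)
  · simp [List.prefix_nil]
  · simp [List.cons_prefix_cons, eq_comm]

lemma mapping_empty_left {η : α → α → ℤ} {F' : LForest α} {M : List (List ℕ × List ℕ)}
    (h : IsMappingF ([] : LForest α) F' M) : wtF η [] F' M = 0 := by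
  have : M = [] := by
    rcases M with _ | ⟨pr, M⟩
    · rfl
    · exfalso
      have h1 := (h.1 pr (by simp)).1
      rw [IsNode] at h1
      rcases hp : pr.1 with _ | ⟨i, q⟩ <;> rw [hp] at h1
      · rw [labelAt_nil] at h1; simp at h1
      · rw [labelAt_cons] at h1; simp at h1
  subst this
  rfl

end Lemmas2

section Lemmas3
variable {α : Type*} [Inhabited α]
open List
set_option linter.unusedSectionVars false

lemma mapping_empty_right {η : α → α → ℤ} {F : LForest α} {M : List (List ℕ × List ℕ)}
    (h : IsMappingF F ([] : LForest α) M) : wtF η F [] M = 0 := by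
  have : M = [] := by
    rcases M with _ | ⟨pr, M⟩
    · rfl
    · exfalso
      have h1 := (h.1 pr (by simp)).2
      rw [IsNode] at h1
      rcases hp : pr.2 with _ | ⟨i, q⟩ <;> rw [hp] at h1
      · rw [labelAt_nil] at h1; simp at h1
      · rw [labelAt_cons] at h1; simp at h1
  subst this
  rfl

lemma prefix_singleton {x : List ℕ} (h : x <+: [0]) : x = [] ∨ x = [0] := by
  rcases x with _ | ⟨i, t⟩
  · exact Or.inl rfl
  · rw [List.cons_prefix_cons, List.prefix_nil] at h
    exact Or.inr (by rw [h.1, h.2])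

lemma not_lex_singleton_zero {q : List ℕ} (hq : q ≠ []) : ¬ List.Lex (· < ·) q [0] := by
  rcases q with _ | ⟨i, t⟩
  · exact absurd rfl hq
  · rw [lex_cons_iff]
    rintro (h | ⟨h, h2⟩)
    · omega
    · exact not_lex_nil h2

lemma zero_first {p : List ℕ} (hne : p ≠ []) (h : ¬ ([0] <+: p)) :
    List.Lex (· < ·) [0] p := by
  rcases p with _ | ⟨i, t⟩
  · exact absurd rfl hne
  · rw [prefix_zero_iff] at h
    simp only [List.head?_cons, Option.some.injEq] at h
    exact lex_cons_iff.2 (Or.inl (by omega))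

lemma posHead_of {p : List ℕ} (hne : p ≠ []) (h : p.head? ≠ some 0) : PosHead p := by
  rcases p with _ | ⟨i, t⟩
  · exact absurd rfl hne
  · rcases i with _ | j
    · simp at h
    · exact ⟨j, t, rfl⟩

end Lemmas3

/-- Shasha–Zhang recurrence for forest similarity:
`sim(F, F') = 0` if `F` or `F'` is empty, and otherwise, with `v₁, v₁'` the
first pre-order nodes (the leftmost roots),
`sim(F, F') = max { sim(F∖v₁, F'), sim(F, F'∖v₁'), sim(F∖sub(v₁), F'∖sub(v₁')) + sim(sub(v₁), sub(v₁')) }`. -/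
theorem stmt12 {α : Type*} [Inhabited α] (η : α → α → ℤ) :
    (∀ (F F' : LForest α) (S : ℤ), (F = [] ∨ F' = []) →
        IsGreatest (simSetF η F F') S → S = 0) ∧
    (∀ (a : α) (ts rest : LForest α) (b : α) (us rest' : LForest α)
        (S S₁ S₂ S₃ S₄ : ℤ),
        IsGreatest (simSetF η (.node a ts :: rest) (.node b us :: rest')) S →
        IsGreatest (simSetF η (ts ++ rest) (.node b us :: rest')) S₁ →
        IsGreatest (simSetF η (.node a ts :: rest) (us ++ rest')) S₂ →
        IsGreatest (simSetF η rest rest') S₃ →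
        IsGreatest (simSetF η [.node a ts] [.node b us]) S₄ →
        S = max S₁ (max S₂ (S₃ + S₄))) := by
  constructor
  · rintro F F' S (rfl | rfl) hS
    · obtain ⟨M, hM, rfl⟩ := hS.1
      exact mapping_empty_left hM
    · obtain ⟨M, hM, rfl⟩ := hS.1
      exact mapping_empty_right hM
  · intro a ts rest b us rest' S S₁ S₂ S₃ S₄ hS hS₁ hS₂ hS₃ hS₄
    -- lower bounds
    have hle1 : S₁ ≤ S := by
      obtain ⟨M, hM, rfl⟩ := hS₁.1
      obtain ⟨hmap, hwt⟩ := translate (η := η) (F := LTree.node a ts :: rest)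
        (F' := LTree.node b us :: rest') (f := phi ts.length) (g := id)
        (P₁ := fun p => p ≠ []) (P₂ := fun _ => True) hM
        (fun pr hpr => ⟨isNode_ne_nil (hM.1 pr hpr).1, trivial⟩)
        (fun p hp => labelAt_phi a ts rest p hp)
        (fun p q hp hq => phi_prefix ts.length p q hp hq)
        (fun p q hp hq => phi_lex ts.length p q hp hq)
        (fun p _ => rfl) (fun p q _ _ => Iff.rfl) (fun p q _ _ => Iff.rfl)
      rw [← hwt]
      exact hS.2 ⟨_, hmap, rfl⟩
    have hle2 : S₂ ≤ S := by
      obtain ⟨M, hM, rfl⟩ := hS₂.1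
      obtain ⟨hmap, hwt⟩ := translate (η := η) (F := LTree.node a ts :: rest)
        (F' := LTree.node b us :: rest') (f := id) (g := phi us.length)
        (P₁ := fun _ => True) (P₂ := fun p => p ≠ []) hM
        (fun pr hpr => ⟨trivial, isNode_ne_nil (hM.1 pr hpr).2⟩)
        (fun p _ => rfl) (fun p q _ _ => Iff.rfl) (fun p q _ _ => Iff.rfl)
        (fun p hp => labelAt_phi b us rest' p hp)
        (fun p q hp hq => phi_prefix us.length p q hp hq)
        (fun p q hp hq => phi_lex us.length p q hp hq)
      rw [← hwt]
      exact hS.2 ⟨_, hmap, rfl⟩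
    have hle3 : S₃ + S₄ ≤ S := by
      obtain ⟨M3, hM3, rfl⟩ := hS₃.1
      obtain ⟨M4, hM4, rfl⟩ := hS₄.1
      obtain ⟨hmap4, hwt4⟩ := translate (η := η) (F := LTree.node a ts :: rest)
        (F' := LTree.node b us :: rest') (f := id) (g := id)
        (P₁ := fun p => IsNode [LTree.node a ts] p)
        (P₂ := fun p => IsNode [LTree.node b us] p) hM4 hM4.1
        (fun p hp => by obtain ⟨q, rfl⟩ := node_single_head hp
                        exact labelAt_cons_zero _ rest q)
        (fun p q _ _ => Iff.rfl) (fun p q _ _ => Iff.rfl)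
        (fun p hp => by obtain ⟨q, rfl⟩ := node_single_head hp
                        exact labelAt_cons_zero _ rest' q)
        (fun p q _ _ => Iff.rfl) (fun p q _ _ => Iff.rfl)
      obtain ⟨hmap3, hwt3⟩ := translate (η := η) (F := LTree.node a ts :: rest)
        (F' := LTree.node b us :: rest') (f := sg) (g := sg)
        (P₁ := fun p => p ≠ []) (P₂ := fun p => p ≠ []) hM3
        (fun pr hpr => ⟨isNode_ne_nil (hM3.1 pr hpr).1, isNode_ne_nil (hM3.1 pr hpr).2⟩)
        (labelAt_sg _ rest) sg_prefix sg_lex (labelAt_sg _ rest') sg_prefix sg_lex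
      have hmap : IsMappingF (LTree.node a ts :: rest) (LTree.node b us :: rest')
          ((M4.map (fun pr => (id pr.1, id pr.2))) ++ (M3.map (fun pr => (sg pr.1, sg pr.2)))) := by
        refine ⟨?_, ?_⟩
        · intro pr hpr
          rcases List.mem_append.1 hpr with h | h
          · exact hmap4.1 pr h
          · exact hmap3.1 pr h
        · rw [List.pairwise_append]
          refine ⟨hmap4.2, hmap3.2, ?_⟩
          intro x hx y hy
          obtain ⟨pr, hpr, rfl⟩ := List.mem_map.1 hx
          obtain ⟨qr, hqr, rfl⟩ := List.mem_map.1 hy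
          obtain ⟨q1, hq1⟩ := node_single_head (hM4.1 pr hpr).1
          obtain ⟨q2, hq2⟩ := node_single_head (hM4.1 pr hpr).2
          have hne1 := isNode_ne_nil (hM3.1 qr hqr).1
          have hne2 := isNode_ne_nil (hM3.1 qr hqr).2
          rcases qr1eq : qr.1 with _ | ⟨j1, t1⟩
          · exact absurd qr1eq hne1
          rcases qr2eq : qr.2 with _ | ⟨j2, t2⟩
          · exact absurd qr2eq hne2
          simp only [Compat, hq1, hq2, qr1eq, qr2eq, sg, id]
          refine ⟨by simp, by simp, ?_, ?_, ?_⟩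
          · simp [List.cons_prefix_cons]
          · simp [List.cons_prefix_cons]
          · constructor <;> intro _ <;> exact List.Lex.rel (Nat.succ_pos _)
      have hsplit : wtF η (LTree.node a ts :: rest) (LTree.node b us :: rest')
          ((M4.map (fun pr => (id pr.1, id pr.2))) ++ (M3.map (fun pr => (sg pr.1, sg pr.2))))
          = wtF η (LTree.node a ts :: rest) (LTree.node b us :: rest')
              (M4.map (fun pr => (id pr.1, id pr.2)))
            + wtF η (LTree.node a ts :: rest) (LTree.node b us :: rest')
              (M3.map (fun pr => (sg pr.1, sg pr.2))) := by
        simp [wtF]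
      have hb := hS.2 ⟨_, hmap, rfl⟩
      rw [hsplit, hwt4, hwt3] at hb
      linarith
    -- upper bound
    have hup : S ≤ max S₁ (max S₂ (S₃ + S₄)) := by
      obtain ⟨M, hM, hSeq⟩ := hS.1
      by_cases c1 : ∀ pr ∈ M, pr.1 ≠ [0]
      · obtain ⟨hmap, hwt⟩ := translate (η := η) (F := ts ++ rest)
          (F' := LTree.node b us :: rest') (f := psi ts.length) (g := id)
          (P₁ := fun p => IsNode (LTree.node a ts :: rest) p ∧ p ≠ [0])
          (P₂ := fun _ => True) hM
          (fun pr hpr => ⟨⟨(hM.1 pr hpr).1, c1 pr hpr⟩, trivial⟩)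
          (fun p hp => psi_labelAt hp.1 hp.2)
          (fun p q hp hq => by
            conv_rhs => rw [← (psi_spec hp.1 hp.2).1, ← (psi_spec hq.1 hq.2).1]
            exact (phi_prefix ts.length _ _ (psi_spec hp.1 hp.2).2 (psi_spec hq.1 hq.2).2).symm)
          (fun p q hp hq => by
            conv_rhs => rw [← (psi_spec hp.1 hp.2).1, ← (psi_spec hq.1 hq.2).1]
            exact (phi_lex ts.length _ _ (psi_spec hp.1 hp.2).2 (psi_spec hq.1 hq.2).2).symm)
          (fun p _ => rfl) (fun p q _ _ => Iff.rfl) (fun p q _ _ => Iff.rfl)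
        refine le_trans ?_ (le_max_left _ _)
        rw [hSeq, ← hwt]
        exact hS₁.2 ⟨_, hmap, rfl⟩
      by_cases c2 : ∀ pr ∈ M, pr.2 ≠ [0]
      · obtain ⟨hmap, hwt⟩ := translate (η := η) (F := LTree.node a ts :: rest)
          (F' := us ++ rest') (f := id) (g := psi us.length)
          (P₁ := fun _ => True)
          (P₂ := fun p => IsNode (LTree.node b us :: rest') p ∧ p ≠ [0]) hM
          (fun pr hpr => ⟨trivial, ⟨(hM.1 pr hpr).2, c2 pr hpr⟩⟩)
          (fun p _ => rfl) (fun p q _ _ => Iff.rfl) (fun p q _ _ => Iff.rfl)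
          (fun p hp => psi_labelAt hp.1 hp.2)
          (fun p q hp hq => by
            conv_rhs => rw [← (psi_spec hp.1 hp.2).1, ← (psi_spec hq.1 hq.2).1]
            exact (phi_prefix us.length _ _ (psi_spec hp.1 hp.2).2 (psi_spec hq.1 hq.2).2).symm)
          (fun p q hp hq => by
            conv_rhs => rw [← (psi_spec hp.1 hp.2).1, ← (psi_spec hq.1 hq.2).1]
            exact (phi_lex us.length _ _ (psi_spec hp.1 hp.2).2 (psi_spec hq.1 hq.2).2).symm)
        refine le_trans ?_ ((le_max_left _ _).trans (le_max_right _ _))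
        rw [hSeq, ← hwt]
        exact hS₂.2 ⟨_, hmap, rfl⟩
      push_neg at c1 c2
      obtain ⟨e1, he1, he1eq⟩ := c1
      obtain ⟨e2, he2, he2eq⟩ := c2
      have hzz : ([0], [0]) ∈ M := by
        rcases eq_or_ne e1 e2 with rfl | hne
        · have he : e1 = (([0] : List ℕ), ([0] : List ℕ)) := Prod.ext he1eq he2eq
          rwa [← he]
        · exfalso
          obtain ⟨d1, d2, i1, i2, i3⟩ := (haveI : Std.Symm Compat := ⟨fun _ _ h => compat_symm h⟩; hM.2.forall he1 he2 hne)
          rw [he1eq] at d1 i1 i2 i3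
          rw [he2eq] at d2 i1 i2 i3
          have hq : e1.2 ≠ [] := isNode_ne_nil (hM.1 e1 he1).2
          have hp : e2.1 ≠ [] := isNode_ne_nil (hM.1 e2 he2).1
          have h1 : ¬ (e1.2 <+: [0]) := by
            intro h
            rcases prefix_singleton h with h' | h'
            · exact hq h'
            · exact d2 h'
          have h2 : ¬ ([0] <+: e2.1) := fun h => h1 (i1.1 h)
          have h3 : ¬ List.Lex (· < ·) e1.2 [0] := not_lex_singleton_zero hq
          exact h3 (i3.1 (zero_first hp h2))
      have key : ∀ pr ∈ M, ([0] <+: pr.1 ↔ [0] <+: pr.2) := by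
        intro pr hpr
        rcases eq_or_ne pr (([0] : List ℕ), ([0] : List ℕ)) with rfl | hne
        · simp
        · exact (haveI : Std.Symm Compat := ⟨fun _ _ h => compat_symm h⟩; hM.2.forall hpr hzz hne).2.2.2.1
      set w := fun pr : List ℕ × List ℕ =>
        η ((labelAt (LTree.node a ts :: rest) pr.1).getD default)
          ((labelAt (LTree.node b us :: rest') pr.2).getD default) with hw
      set p0 : List ℕ × List ℕ → Bool := fun pr => decide (pr.1.head? = some 0) with hp0
      have hM4 : IsMappingF (LTree.node a ts :: rest) (LTree.node b us :: rest')
          (M.filter p0) :=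
        ⟨fun pr h => hM.1 pr (List.mem_of_mem_filter h), hM.2.sublist List.filter_sublist⟩
      have hM3 : IsMappingF (LTree.node a ts :: rest) (LTree.node b us :: rest')
          (M.filter (fun pr => !p0 pr)) :=
        ⟨fun pr h => hM.1 pr (List.mem_of_mem_filter h), hM.2.sublist List.filter_sublist⟩
      have hmem4 : ∀ pr ∈ M.filter p0, pr.1.head? = some 0 ∧ pr.2.head? = some 0 := by
        intro pr h
        rw [List.mem_filter] at h
        have h1 : pr.1.head? = some 0 := by
          have := h.2
          rw [hp0] at this
          exact of_decide_eq_true this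
        have h2 : [0] <+: pr.2 := (key pr h.1).1 ((prefix_zero_iff pr.1).2 h1)
        exact ⟨h1, (prefix_zero_iff pr.2).1 h2⟩
      have hmem3 : ∀ pr ∈ M.filter (fun pr => !p0 pr), PosHead pr.1 ∧ PosHead pr.2 := by
        intro pr h
        rw [List.mem_filter] at h
        have h1 : pr.1.head? ≠ some 0 := by
          have := h.2
          rw [hp0] at this
          simpa using this
        have hne1 : pr.1 ≠ [] := isNode_ne_nil (hM.1 pr h.1).1
        have hne2 : pr.2 ≠ [] := isNode_ne_nil (hM.1 pr h.1).2
        have h2 : pr.2.head? ≠ some 0 := by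
          intro hc
          exact h1 ((prefix_zero_iff pr.1).1
            ((key pr h.1).2 ((prefix_zero_iff pr.2).2 hc)))
        exact ⟨posHead_of hne1 h1, posHead_of hne2 h2⟩
      obtain ⟨hmap4, hwt4⟩ := translate (η := η) (F := [LTree.node a ts])
        (F' := [LTree.node b us]) (f := id) (g := id)
        (P₁ := fun p => p.head? = some 0) (P₂ := fun p => p.head? = some 0)
        hM4 hmem4
        (fun p hp => by
          rcases p with _ | ⟨i, q⟩
          · simp at hp
          · simp only [List.head?_cons, Option.some.injEq] at hp
            subst hp
            exact (labelAt_cons_zero _ rest q).symm)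
        (fun p q _ _ => Iff.rfl) (fun p q _ _ => Iff.rfl)
        (fun p hp => by
          rcases p with _ | ⟨i, q⟩
          · simp at hp
          · simp only [List.head?_cons, Option.some.injEq] at hp
            subst hp
            exact (labelAt_cons_zero _ rest' q).symm)
        (fun p q _ _ => Iff.rfl) (fun p q _ _ => Iff.rfl)
      obtain ⟨hmap3, hwt3⟩ := translate (η := η) (F := rest) (F' := rest')
        (f := dec) (g := dec)
        (P₁ := PosHead) (P₂ := PosHead) hM3 hmem3
        (labelAt_dec _ rest) dec_prefix dec_lex
        (labelAt_dec _ rest') dec_prefix dec_lex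
      have h4le : wtF η (LTree.node a ts :: rest) (LTree.node b us :: rest')
          (M.filter p0) ≤ S₄ := by
        rw [← hwt4]
        exact hS₄.2 ⟨_, hmap4, rfl⟩
      have h3le : wtF η (LTree.node a ts :: rest) (LTree.node b us :: rest')
          (M.filter (fun pr => !p0 pr)) ≤ S₃ := by
        rw [← hwt3]
        exact hS₃.2 ⟨_, hmap3, rfl⟩
      have hperm := (List.filter_append_perm p0 M).map w
      have hsum : wtF η (LTree.node a ts :: rest) (LTree.node b us :: rest') M
          = wtF η (LTree.node a ts :: rest) (LTree.node b us :: rest') (M.filter p0)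
            + wtF η (LTree.node a ts :: rest) (LTree.node b us :: rest')
              (M.filter (fun pr => !p0 pr)) := by
        rw [wtF, ← hperm.sum_eq, List.map_append, List.sum_append]
        rfl
      refine le_trans ?_ ((le_max_right _ _).trans (le_max_right _ _))
      rw [hSeq, hsum]
      linarith
    exact le_antisymm hup (max_le hle1 (max_le hle2 hle3))


end Stmt12
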